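/- Let x := [[0, -i/2],[i/2, 0]] and y := [[0, -j/2],[j/2, 0]] in Mat₂(ℍ). If W ⊆ ℍ² is a right ℍ-submodule satisfying x·W ⊆ W and y·W ⊆ W (action by matrix–vector multiplication), then W = {0} or W = ℍ². -/

import Mathlib

/- Statement 7: the pair of matrices x, y acts ℍ-irreducibly on ℍ². -/

open Quaternion Matrix

noncomputable section

/-- The quaternions over ℝ. -/
abbrev Quat := Quaternion ℝ

/-- The imaginary unit `i` of the quaternions. -/
def qi : Quat := ⟨0, 1, 0, 0⟩

/-- The imaginary unit `j` of the quaternions. -/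
def qj : Quat := ⟨0, 0, 1, 0⟩

/-- The matrix x = [[0, -i/2],[i/2, 0]]. -/
def xmat : Matrix (Fin 2) (Fin 2) Quat := !![0, -((1/2 : ℝ) • qi); (1/2 : ℝ) • qi, 0]

/-- The matrix y = [[0, -j/2],[j/2, 0]]. -/
def ymat : Matrix (Fin 2) (Fin 2) Quat := !![0, -((1/2 : ℝ) • qj); (1/2 : ℝ) • qj, 0]

/-- The imaginary unit `k` of the quaternions. -/
def qk : Quat := ⟨0, 0, 0, 1⟩

/-- Helper constructor producing a `Quat` (rather than the raw quaternion algebra type). -/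
def mk4 (a b c d : ℝ) : Quat := ⟨a, b, c, d⟩

@[simp] lemma qi_re : qi.re = 0 := rfl
@[simp] lemma qi_imI : qi.imI = 1 := rfl
@[simp] lemma qi_imJ : qi.imJ = 0 := rfl
@[simp] lemma qi_imK : qi.imK = 0 := rfl
@[simp] lemma qj_re : qj.re = 0 := rfl
@[simp] lemma qj_imI : qj.imI = 0 := rfl
@[simp] lemma qj_imJ : qj.imJ = 1 := rfl
@[simp] lemma qj_imK : qj.imK = 0 := rfl
@[simp] lemma qk_re : qk.re = 0 := rfl
@[simp] lemma qk_imI : qk.imI = 0 := rfl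
@[simp] lemma qk_imJ : qk.imJ = 0 := rfl
@[simp] lemma qk_imK : qk.imK = 1 := rfl
@[simp] lemma mk4_re (a b c d : ℝ) : (mk4 a b c d).re = a := rfl
@[simp] lemma mk4_imI (a b c d : ℝ) : (mk4 a b c d).imI = b := rfl
@[simp] lemma mk4_imJ (a b c d : ℝ) : (mk4 a b c d).imJ = c := rfl
@[simp] lemma mk4_imK (a b c d : ℝ) : (mk4 a b c d).imK = d := rfl

lemma mulVec_xmat (a b : Quat) :
    xmat.mulVec ![a, b] = ![-(((1/2:ℝ)•qi) * b), ((1/2:ℝ)•qi) * a] := by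
  funext i; fin_cases i <;> simp [xmat, mulVec, dotProduct, Fin.sum_univ_two]

lemma mulVec_ymat (a b : Quat) :
    ymat.mulVec ![a, b] = ![-(((1/2:ℝ)•qj) * b), ((1/2:ℝ)•qj) * a] := by
  funext i; fin_cases i <;> simp [ymat, mulVec, dotProduct, Fin.sum_univ_two]

lemma op_smul_pair (a b s : Quat) :
    (MulOpposite.op s) • ![a, b] = ![a * s, b * s] := by
  funext i; fin_cases i <;> simp

lemma quatA (a b c d : ℝ) :
    -(((1/2:ℝ)•qi) * (((1/2:ℝ)•qj) * mk4 a b c d)) * ((4:ℝ)•qk)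
      = mk4 a (-b) (-c) d := by
  ext <;> simp <;> ring

lemma quatB : (((1/2:ℝ)•qi) * -((1/2:ℝ)•qj)) * ((4:ℝ)•qk) = (1 : Quat) := by
  ext <;> simp <;> norm_num

lemma quatC (a d : ℝ) :
    ((1/2:ℝ)•qi) * mk4 a 0 0 d * ((2:ℝ)•qi) = mk4 (-a) 0 0 d := by
  ext <;> simp <;> ring

lemma quat4 : -((1/2:ℝ)•qi) * ((2:ℝ)•qi) = (1 : Quat) := by
  ext <;> simp

lemma hi_ne : ((1/2:ℝ)•qi : Quat) ≠ 0 := by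
  intro h
  have := congrArg QuaternionAlgebra.imI h
  simp at this

theorem xy_act_H_irreducibly
    (W : Submodule Quatᵐᵒᵖ (Fin 2 → Quat))
    (hx : ∀ v ∈ W, xmat.mulVec v ∈ W)
    (hy : ∀ v ∈ W, ymat.mulVec v ∈ W) :
    W = ⊥ ∨ W = ⊤ := by
  by_cases hbot : W = ⊥
  · exact Or.inl hbot
  right
  -- L1 : if ![c,0] ∈ W with c ≠ 0 then W = ⊤
  have L1 : ∀ c : Quat, c ≠ 0 → (![c, 0] : Fin 2 → Quat) ∈ W → W = ⊤ := by
    intro c hc hmem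
    have hrow1 : ∀ s : Quat, (![s, 0] : Fin 2 → Quat) ∈ W := by
      intro s
      have := W.smul_mem (MulOpposite.op (c⁻¹ * s)) hmem
      rwa [op_smul_pair, zero_mul, ← mul_assoc, mul_inv_cancel₀ hc, one_mul] at this
    have hx0 : (![0, ((1/2:ℝ)•qi) * c] : Fin 2 → Quat) ∈ W := by
      have := hx _ hmem
      rwa [mulVec_xmat, mul_zero, neg_zero] at this
    have hc2 : ((1/2:ℝ)•qi : Quat) * c ≠ 0 := mul_ne_zero hi_ne hc
    have hrow2 : ∀ s : Quat, (![0, s] : Fin 2 → Quat) ∈ W := by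
      intro s
      have := W.smul_mem (MulOpposite.op ((((1/2:ℝ)•qi) * c)⁻¹ * s)) hx0
      rwa [op_smul_pair, zero_mul, ← mul_assoc, mul_inv_cancel₀ hc2, one_mul] at this
    rw [Submodule.eq_top_iff']
    intro w
    have hw : w = ![w 0, 0] + ![0, w 1] := by
      funext i; fin_cases i <;> simp
    rw [hw]
    exact W.add_mem (hrow1 _) (hrow2 _)
  -- L2 : if ![0,c] ∈ W with c ≠ 0 then W = ⊤
  have L2 : ∀ c : Quat, c ≠ 0 → (![0, c] : Fin 2 → Quat) ∈ W → W = ⊤ := by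
    intro c hc hmem
    have := hx _ hmem
    rw [mulVec_xmat, mul_zero] at this
    exact L1 _ (neg_ne_zero.mpr (mul_ne_zero hi_ne hc)) this
  obtain ⟨v, hv, hv0⟩ := (Submodule.ne_bot_iff W).mp hbot
  by_cases h1 : v 1 = 0
  · have h0 : v 0 ≠ 0 := by
      intro h0
      apply hv0; funext i; fin_cases i <;> simp [h0, h1]
    have hv' : v = ![v 0, 0] := by funext i; fin_cases i <;> simp [h1]
    rw [hv'] at hv
    exact L1 _ h0 hv
  · set q : Quat := v 0 * (v 1)⁻¹ with hqdef
    have hu : (![q, 1] : Fin 2 → Quat) ∈ W := by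
      have h := W.smul_mem (MulOpposite.op (v 1)⁻¹) hv
      have e : (MulOpposite.op (v 1)⁻¹) • v = ![q, 1] := by
        funext i; fin_cases i <;>
          simp [hqdef, mul_inv_cancel₀ h1, MulOpposite.smul_eq_mul_unop]
      rwa [e] at h
    set a := q.re with ha
    set b := q.imI with hb
    set c := q.imJ with hc
    set d := q.imK with hd
    have hq : q = mk4 a b c d := by
      ext <;> simp [ha, hb, hc, hd]
    rw [hq] at hu
    -- z = (x (y u)) • (4k) = ![mk4 a (-b) (-c) d, 1] ∈ W
    have hz : (![mk4 a (-b) (-c) d, 1] : Fin 2 → Quat) ∈ W := by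
      have h2 := hx _ (hy _ hu)
      rw [mulVec_ymat, mul_one, mulVec_xmat] at h2
      have h3 := W.smul_mem (MulOpposite.op ((4:ℝ)•qk)) h2
      rw [op_smul_pair, quatA, quatB] at h3
      exact h3
    have hs1 : (![mk4 0 (2*b) (2*c) 0, 0] : Fin 2 → Quat) ∈ W := by
      have hsub := W.sub_mem hu hz
      have e : (![mk4 a b c d, 1] : Fin 2 → Quat) - ![mk4 a (-b) (-c) d, 1]
          = ![mk4 0 (2*b) (2*c) 0, 0] := by
        funext i; fin_cases i <;> simp <;> ext <;> simp <;> ring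
      rwa [e] at hsub
    by_cases hbc : b = 0 ∧ c = 0
    · obtain ⟨hb0, hc0⟩ := hbc
      rw [hb0, hc0] at hu
      -- w = (x u) • (2i) = ![1, mk4 (-a) 0 0 d] ∈ W
      have hw : (![1, mk4 (-a) 0 0 d] : Fin 2 → Quat) ∈ W := by
        have h2 := hx _ hu
        rw [mulVec_xmat, mul_one] at h2
        have h3 := W.smul_mem (MulOpposite.op ((2:ℝ)•qi)) h2
        rw [op_smul_pair, quat4, quatC] at h3
        exact h3
      have ht : (![0, mk4 (1+a^2+d^2) 0 0 0] : Fin 2 → Quat) ∈ W := by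
        have h4 := W.smul_mem (MulOpposite.op (mk4 a 0 0 d)) hw
        rw [op_smul_pair, one_mul] at h4
        have h5 := W.sub_mem hu h4
        have e : (![mk4 a 0 0 d, 1] : Fin 2 → Quat)
            - ![mk4 a 0 0 d, mk4 (-a) 0 0 d * mk4 a 0 0 d]
            = ![0, mk4 (1+a^2+d^2) 0 0 0] := by
          funext i; fin_cases i <;> simp <;> ext <;> simp <;> ring
        rwa [e] at h5
      apply L2 _ _ ht
      intro h
      have hre := congrArg QuaternionAlgebra.re h
      simp at hre
      nlinarith
    · apply L1 _ _ hs1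
      intro h
      have hbI := congrArg QuaternionAlgebra.imI h
      have hcJ := congrArg QuaternionAlgebra.imJ h
      simp at hbI hcJ
      exact hbc ⟨hbI, hcJ⟩
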